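/- For any δ with 0 < δ < 2 g(r̲) ∫_{r̲}^{r̄} (r − r̲) dr, the function h₁(r) = r − r̲ + δ satisfies the low-inequality condition h₁(r̲) ≤ 2 g(r̲) ∫ h₁, and for δ sufficiently small the function h₂(r) = 1/√(r − r̲ + δ) satisfies the high-inequality condition h₂(r̲) > 2 g(r̲) ∫ h₂. Hence there exist two positive integrable functions h₁, h₂ on [r̲, r̄] such that h₁ satisfies h₁(r̲) ≤ 2 g(r̲) ∫_{r̲}^{r̄} h₁(r) dr while h₂ satisfies h₂(r̲) > 2 g(r̲) ∫_{r̲}^{r̄} h₂(r) dr. -/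

import Mathlib

open MeasureTheory intervalIntegral

lemma sqrt_int (rl ru δ : ℝ) (hlt : rl < ru) (hδ : 0 < δ) :
    ∫ r in rl..ru, 1 / Real.sqrt (r - rl + δ) =
      2 * Real.sqrt (ru - rl + δ) - 2 * Real.sqrt δ := by
  have huIcc : Set.uIcc rl ru = Set.Icc rl ru := Set.uIcc_of_le hlt.le
  have hpos : ∀ x ∈ Set.uIcc rl ru, 0 < x - rl + δ := by
    intro x hx
    rw [huIcc] at hx
    have := hx.1
    linarith
  have h := intervalIntegral.integral_eq_sub_of_hasDerivAt
    (f := fun r => 2 * Real.sqrt (r - rl + δ))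
    (f' := fun r => 1 / Real.sqrt (r - rl + δ)) (a := rl) (b := ru)
    (fun x hx => by
      have hx0 := hpos x hx
      have hinner : HasDerivAt (fun r : ℝ => r - rl + δ) 1 x := by
        simpa using ((hasDerivAt_id x).sub_const rl).add_const δ
      have hs := (Real.hasDerivAt_sqrt hx0.ne').comp x hinner
      have := hs.const_mul 2
      have hsq : Real.sqrt (x - rl + δ) ≠ 0 := by positivity
      exact this.congr_deriv (by
      field_simp))
    (by
      apply ContinuousOn.intervalIntegrable
      apply ContinuousOn.div continuousOn_const
      · exact (Real.continuous_sqrt.comp (by continuity)).continuousOn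
      · intro x hx
        have := hpos x hx
        positivity)
  rw [h]
  simp

lemma lin_int (rl ru c : ℝ) :
    ∫ r in rl..ru, (r - rl + c) = (ru - rl)^2/2 + c * (ru - rl) := by
  have h1 : ∫ r in rl..ru, (r - rl + c) =
      (∫ r in rl..ru, (r - rl)) + ∫ r in rl..ru, (c:ℝ) := by
    apply intervalIntegral.integral_add
    · exact (intervalIntegrable_id).sub (intervalIntegrable_const)
    · exact intervalIntegrable_const
  have h2 : ∫ r in rl..ru, (r - rl) = (ru - rl)^2/2 := by
    have := intervalIntegral.integral_comp_sub_right (a := rl) (b := ru) (fun x => x) rl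
    rw [this, integral_id]
    ring
  rw [h1, h2, intervalIntegral.integral_const]
  simp [smul_eq_mul]; ring

/-- for a fixed positive density `g` on `[r̲, r̄]`, any
`0 < δ < 2 g(r̲) ∫ (r - r̲) dr` makes `h₁(r) = r - r̲ + δ` satisfy the
low-inequality condition, for small `δ` the function `h₂(r) = 1/√(r - r̲ + δ)`
satisfies the high-inequality condition; hence there exist two positive
integrable functions `h₁, h₂` on `[r̲, r̄]` with
`h₁(r̲) ≤ 2 g(r̲) ∫ h₁` and `h₂(r̲) > 2 g(r̲) ∫ h₂`. -/
theorem nonidentification_low_and_high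
    (rl ru : ℝ) (hlt : rl < ru)
    (g : ℝ → ℝ) (hg : ∀ r ∈ Set.Icc rl ru, 0 < g r) :
    (∀ δ : ℝ, 0 < δ → δ ≤ 2 * g rl * ∫ r in rl..ru, (r - rl) →
      (fun r => r - rl + δ) rl ≤ 2 * g rl * ∫ r in rl..ru, (r - rl + δ)) ∧
    (∃ δ₀ : ℝ, 0 < δ₀ ∧ ∀ δ : ℝ, 0 < δ → δ < δ₀ →
      (fun r => 1 / Real.sqrt (r - rl + δ)) rl >
        2 * g rl * ∫ r in rl..ru, 1 / Real.sqrt (r - rl + δ)) ∧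
    (∃ h₁ h₂ : ℝ → ℝ,
      (∀ r ∈ Set.Icc rl ru, 0 < h₁ r) ∧ IntegrableOn h₁ (Set.Icc rl ru) ∧
      (∀ r ∈ Set.Icc rl ru, 0 < h₂ r) ∧ IntegrableOn h₂ (Set.Icc rl ru) ∧
      h₁ rl ≤ 2 * g rl * ∫ r in rl..ru, h₁ r ∧
      h₂ rl > 2 * g rl * ∫ r in rl..ru, h₂ r) := by
  have hgrl : 0 < g rl := hg rl ⟨le_refl rl, hlt.le⟩
  have hd : 0 < ru - rl := by linarith
  have h0 : ∫ r in rl..ru, (r - rl) = (ru - rl)^2/2 := by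
    simpa using lin_int rl ru 0
  -- Part 1
  have part1 : ∀ δ : ℝ, 0 < δ → δ ≤ 2 * g rl * ∫ r in rl..ru, (r - rl) →
      (fun r => r - rl + δ) rl ≤ 2 * g rl * ∫ r in rl..ru, (r - rl + δ) := by
    intro δ hδ hle
    rw [h0] at hle
    simp only
    rw [lin_int]
    nlinarith [mul_pos hgrl (mul_pos hδ hd)]
  -- Part 2
  set C : ℝ := 4 * g rl * Real.sqrt (ru - rl + 1) with hC
  have hCpos : 0 < C := by
    have : 0 < Real.sqrt (ru - rl + 1) := Real.sqrt_pos.mpr (by linarith)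
    positivity
  have part2 : ∀ δ : ℝ, 0 < δ → δ < min 1 (1/C^2) →
      (fun r => 1 / Real.sqrt (r - rl + δ)) rl >
        2 * g rl * ∫ r in rl..ru, 1 / Real.sqrt (r - rl + δ) := by
    intro δ hδ hδlt
    have hδ1 : δ < 1 := lt_of_lt_of_le hδlt (min_le_left _ _)
    have hδC : δ < 1/C^2 := lt_of_lt_of_le hδlt (min_le_right _ _)
    rw [sqrt_int rl ru δ hlt hδ]
    simp only [sub_self, zero_add]
    have hsd : 0 < Real.sqrt δ := Real.sqrt_pos.mpr hδ
    -- RHS bound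
    have hs1 : Real.sqrt (ru - rl + δ) ≤ Real.sqrt (ru - rl + 1) :=
      Real.sqrt_le_sqrt (by linarith)
    have hRHS : 2 * g rl * (2 * Real.sqrt (ru - rl + δ) - 2 * Real.sqrt δ) ≤ C := by
      rw [hC]
      nlinarith [hsd.le, hgrl]
    -- LHS bound
    have hsδ : Real.sqrt δ < 1 / C := by
      have h1C : (1:ℝ)/C = Real.sqrt ((1/C)^2) := (Real.sqrt_sq (by positivity)).symm
      rw [h1C]
      apply Real.sqrt_lt_sqrt hδ.le
      calc δ < 1/C^2 := hδC
        _ = (1/C)^2 := by field_simp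
    have hLHS : C < 1 / Real.sqrt δ := by
      rw [lt_div_iff₀ hsd]
      calc C * Real.sqrt δ < C * (1/C) := by
            exact mul_lt_mul_of_pos_left hsδ hCpos
        _ = 1 := by field_simp
    linarith
  refine ⟨part1, ⟨min 1 (1/C^2), by positivity, part2⟩, ?_⟩
  -- Part 3
  set δ₁ : ℝ := g rl * (ru - rl)^2 with hδ₁
  have hδ₁pos : 0 < δ₁ := by positivity
  set δ₂ : ℝ := min 1 (1/C^2) / 2 with hδ₂
  have hδ₂pos : 0 < δ₂ := by positivity
  have hδ₂lt : δ₂ < min 1 (1/C^2) := by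
    rw [hδ₂]; have : 0 < min 1 (1/C^2) := by positivity
    linarith
  refine ⟨fun r => r - rl + δ₁, fun r => 1 / Real.sqrt (r - rl + δ₂),
    ?_, ?_, ?_, ?_, ?_, ?_⟩
  · intro r hr
    have := hr.1
    simp only
    linarith
  · exact (Continuous.continuousOn (by continuity)).integrableOn_Icc
  · intro r hr
    have h1 : 0 < r - rl + δ₂ := by have := hr.1; linarith
    have : 0 < Real.sqrt (r - rl + δ₂) := Real.sqrt_pos.mpr h1
    positivity
  · apply ContinuousOn.integrableOn_Icc
    apply ContinuousOn.div continuousOn_const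
    · exact (Real.continuous_sqrt.comp (by continuity)).continuousOn
    · intro x hx
      have h1 : 0 < x - rl + δ₂ := by have := hx.1; linarith
      have : 0 < Real.sqrt (x - rl + δ₂) := Real.sqrt_pos.mpr h1
      positivity
  · exact part1 δ₁ hδ₁pos (by rw [h0]; rw [hδ₁]; ring_nf; nlinarith [hgrl, hd])
  · exact part2 δ₂ hδ₂pos hδ₂lt
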